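/- For all n ≥ 1, ∑_{j=0}^{n-1} 2^{n-j} · C(n+j-1, j) · (n-j) = n · C(2n, n). -/

import Mathlib

theorem aux2 (n : ℕ) (hn : 1 ≤ n) : ∀ m, m < n →
    ∑ j ∈ Finset.range (m + 1), 2 ^ (n - j) * Nat.choose (n + j - 1) j * (n - j) =
      n * 2 ^ (n - m) * Nat.choose (n + m) m := by
  intro m
  induction m with
  | zero =>
    intro _
    simp [mul_comm]
  | succ m ih =>
    intro h
    have hm : m < n := Nat.lt_of_succ_lt h
    rw [Finset.sum_range_succ, ih hm]
    have h1 : n + (m + 1) - 1 = n + m := by omega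
    have h2 : 2 ^ (n - m) = 2 * 2 ^ (n - (m + 1)) := by
      rw [← pow_succ']
      congr 1
      omega
    have h3 : Nat.choose (n + m) (m + 1) * (m + 1) = Nat.choose (n + m) m * n := by
      have := Nat.choose_succ_right_eq (n + m) m
      simpa using this
    have h4 : Nat.choose (n + m + 1) (m + 1) = Nat.choose (n + m) m + Nat.choose (n + m) (m + 1) := by
      rw [Nat.choose_succ_succ]
    have h5 : n - (m + 1) + (m + 1) = n := by omega
    rw [h1, h2]
    have h6 : n + (m + 1) = n + m + 1 := by omega
    rw [h6, h4]
    set P := 2 ^ (n - (m + 1))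
    set A := Nat.choose (n + m) m
    set B := Nat.choose (n + m) (m + 1)
    -- goal: n * (2 * P) * A + P * B * (n - (m+1)) = n * P * (A + B)
    have hsub : n - (m + 1) = n - (m + 1) := rfl
    obtain ⟨k, hk⟩ : ∃ k, n = m + 1 + k := ⟨n - (m + 1), by omega⟩
    have hk2 : n - (m + 1) = k := by omega
    rw [hk2]
    have h7 : B * n = A * n + B * k := by
      calc B * n = B * (m + 1) + B * k := by rw [hk]; ring
        _ = A * n + B * k := by rw [h3]
    have h8 : n * P * (A + B) = P * (n * A) + P * (B * n) := by ring
    rw [h8, h7]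
    ring

theorem stmt2 (n : ℕ) (hn : 1 ≤ n) :
    ∑ j ∈ Finset.range n, 2 ^ (n - j) * Nat.choose (n + j - 1) j * (n - j) =
      n * Nat.choose (2 * n) n := by
  obtain ⟨m, rfl⟩ : ∃ m, n = m + 1 := ⟨n - 1, by omega⟩
  rw [aux2 (m + 1) hn m (Nat.lt_succ_self m)]
  have h1 : m + 1 - m = 1 := by omega
  rw [h1]
  have h2 : (m + 1) + m = 2 * (m + 1) - 1 := by omega
  have := Nat.add_one_mul_choose_eq (2 * m + 1) m
  -- succ (2m+1) * choose (2m+1) m = choose (2m+2) (m+1) * (m+1)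
  have h3 : m + 1 + m = 2 * m + 1 := by omega
  rw [h3]
  have h4 : 2 * (m + 1) = 2 * m + 2 := by omega
  rw [h4]
  rw [show 2 * m + 1 + 1 = 2 * m + 2 by omega] at this
  nlinarith [this]
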